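/- (Monotone convergence of the entropy-regularized reward in AREA, Theorem 5 of the paper.) Let r : 𝓗^T×𝓜^T → ℝ be a reward and γ > 0. Let (P̂^{(n)})_{n≥0} be human models and (Q̂^{(n)})_{n≥1} machine policies with full support (Q̂^{(n)}(m_t|h^{t-1},m^{t-1}) > 0 everywhere) such that: (i) for every n ≥ 0, Q̂^{(n+1)} maximizes Q ↦ H_{P̂^{(n)}Q}(M^T‖H^T) + γ·E_{P̂^{(n)}Q}[r(H^T,M^T)] over all machine policies; and (ii) for every n ≥ 1 the step-dependent inequality constraint holds: E_{P̂^{(n)}Q̂^{(n)}}[−log Q̂^{(n)}(M^T‖H^T) + γ·r(H^T,M^T)] ≥ E_{P̂^{(n-1)}Q̂^{(n)}}[−log Q̂^{(n)}(M^T‖H^T) + γ·r(H^T,M^T)]. Then the sequence L^{(n)} := E_{P̂^{(n)}Q̂^{(n)}}[−log Q̂^{(n)}(M^T‖H^T) + γ·r(H^T,M^T)] (n ≥ 1) is nondecreasing and bounded above by T·log|𝓜| + γ·max_{h^T,m^T} r(h^T,m^T); hence it converges. -/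

import Mathlib

/-! Common framework: finite-horizon human–machine interaction processes.
Times are 0-indexed: step `t : Fin T` corresponds to the paper's step `t+1`.
A human model gives conditional PMFs `P(h_t | h^{t-1}, m^t)`: the value
`p t h m a` may depend only on `h s` for `s < t`, on `m s` for `s ≤ t`, and on `a`.
A machine policy gives conditional PMFs `Q(m_t | h^{t-1}, m^{t-1})`: the value
`q t h m b` may depend only on `h s`, `m s` for `s < t`, and on `b`. -/

structure HumanModel (T : ℕ) (H M : Type*) [Fintype H] where
  p : Fin T → (Fin T → H) → (Fin T → M) → H → ℝ
  causal : ∀ (t : Fin T) (h h' : Fin T → H) (m m' : Fin T → M),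
      (∀ s, s < t → h s = h' s) → (∀ s, s ≤ t → m s = m' s) → p t h m = p t h' m'
  nonneg : ∀ t h m a, 0 ≤ p t h m a
  sum_one : ∀ t h m, ∑ a, p t h m a = 1

structure MachinePolicy (T : ℕ) (H M : Type*) [Fintype M] where
  q : Fin T → (Fin T → H) → (Fin T → M) → M → ℝ
  causal : ∀ (t : Fin T) (h h' : Fin T → H) (m m' : Fin T → M),
      (∀ s, s < t → h s = h' s) → (∀ s, s < t → m s = m' s) → q t h m = q t h' m'
  nonneg : ∀ t h m b, 0 ≤ q t h m b
  sum_one : ∀ t h m, ∑ b, q t h m b = 1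

variable {T : ℕ} {H M : Type*} [Fintype H] [Fintype M]

/-- Causally conditioned distribution of the human: `P(h^T ‖ m^T)`. -/
noncomputable def HumanModel.cc (P : HumanModel T H M) (h : Fin T → H) (m : Fin T → M) : ℝ :=
  ∏ t, P.p t h m (h t)

/-- Causally conditioned distribution of the machine: `Q(m^T ‖ h^T)`. -/
noncomputable def MachinePolicy.cc (Q : MachinePolicy T H M) (h : Fin T → H) (m : Fin T → M) : ℝ :=
  ∏ t, Q.q t h m (m t)

/-- Joint PMF `PQ(h^T, m^T)`. -/
noncomputable def jointPMF (P : HumanModel T H M) (Q : MachinePolicy T H M)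
    (h : Fin T → H) (m : Fin T → M) : ℝ :=
  P.cc h m * Q.cc h m

/-- Expectation `E_{PQ}[φ(H^T, M^T)]`. -/
noncomputable def expVal (P : HumanModel T H M) (Q : MachinePolicy T H M)
    (φ : (Fin T → H) → (Fin T → M) → ℝ) : ℝ :=
  ∑ h : Fin T → H, ∑ m : Fin T → M, jointPMF P Q h m * φ h m

/-- Causally conditioned entropy of the human, `H_{PQ}(H^T ‖ M^T)`. -/
noncomputable def humanEntropy (P : HumanModel T H M) (Q : MachinePolicy T H M) : ℝ :=
  ∑ h : Fin T → H, ∑ m : Fin T → M, jointPMF P Q h m * (- Real.log (P.cc h m))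

/-- Causally conditioned entropy of the machine, `H_{PQ}(M^T ‖ H^T)`. -/
noncomputable def machineEntropy (P : HumanModel T H M) (Q : MachinePolicy T H M) : ℝ :=
  ∑ h : Fin T → H, ∑ m : Fin T → M, jointPMF P Q h m * (- Real.log (Q.cc h m))

/-- The entropy-regularized expected reward at AREA iteration `n`:
`L^{(n)} = E_{P̂^{(n)}Q̂^{(n)}}[−log Q̂^{(n)}(M^T‖H^T) + γ·r(H^T,M^T)]`. -/
noncomputable def areaL (P : ℕ → HumanModel T H M) (Q : ℕ → MachinePolicy T H M)
    (r : (Fin T → H) → (Fin T → M) → ℝ) (γ : ℝ) (n : ℕ) : ℝ :=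
  expVal (P n) (Q n) (fun h m => - Real.log ((Q n).cc h m) + γ * r h m)


section AuxProofs

lemma sum_update_aux {X : Type*} [Fintype X] {T : ℕ} (k : Fin T) (F : (Fin T → X) → ℝ) :
    ∑ x : Fin T → X, ∑ a : X, F (Function.update x k a)
      = (Fintype.card X : ℝ) * ∑ x : Fin T → X, F x := by
  have h1 : ∑ p : (Fin T → X) × X, F (Function.update p.1 k p.2)
      = ∑ p : (Fin T → X) × X, F p.1 := by
    apply Fintype.sum_equiv
      ⟨fun p => (Function.update p.1 k p.2, p.1 k),
       fun p => (Function.update p.1 k p.2, p.1 k), ?_, ?_⟩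
    · intro p; rfl
    · intro p
      simp [Function.update_idem, Function.update_eq_self]
    · intro p
      simp [Function.update_idem, Function.update_eq_self]
  calc ∑ x : Fin T → X, ∑ a : X, F (Function.update x k a)
      = ∑ p : (Fin T → X) × X, F (Function.update p.1 k p.2) :=
        (Fintype.sum_prod_type (f := fun p => F (Function.update p.1 k p.2))).symm
    _ = ∑ p : (Fin T → X) × X, F p.1 := h1
    _ = ∑ x : Fin T → X, ∑ _a : X, F x := Fintype.sum_prod_type (f := fun p => F p.1)
    _ = (Fintype.card X : ℝ) * ∑ x : Fin T → X, F x := by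
        simp [Finset.mul_sum, mul_comm]

lemma chain_sum {X : Type*} [Fintype X] [Nonempty X] {T : ℕ}
    (g : Fin T → (Fin T → X) → ℝ)
    (hdep : ∀ (t : Fin T) (x x' : Fin T → X), (∀ s, s ≤ t → x s = x' s) → g t x = g t x')
    (hsum : ∀ (t : Fin T) (x : Fin T → X), ∑ a, g t (Function.update x t a) = 1) :
    ∑ x : Fin T → X, ∏ t, g t x = 1 := by
  have hcard : (0 : ℝ) < (Fintype.card X : ℝ) := by
    exact_mod_cast Fintype.card_pos
  have key : ∀ k, k ≤ T →
      ∑ x : Fin T → X, ∏ t ∈ Finset.univ.filter (fun t : Fin T => t.val < k), g t x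
        = (Fintype.card X : ℝ) ^ (T - k) := by
    intro k
    induction k with
    | zero =>
      intro _
      have : Finset.univ.filter (fun t : Fin T => t.val < 0) = ∅ := by
        simp
      simp [this, Finset.card_univ]
    | succ k ih =>
      intro hk1
      have hk : k < T := hk1
      have ihk := ih (le_of_lt hk)
      set t0 : Fin T := ⟨k, hk⟩ with ht0
      have hfil : Finset.univ.filter (fun t : Fin T => t.val < k + 1)
          = insert t0 (Finset.univ.filter (fun t : Fin T => t.val < k)) := by
        ext t
        simp [Fin.ext_iff, ht0]
        omega
      have hnot : t0 ∉ Finset.univ.filter (fun t : Fin T => t.val < k) := by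
        simp [ht0]
      have hmul : (Fintype.card X : ℝ) *
          ∑ x : Fin T → X, ∏ t ∈ Finset.univ.filter (fun t : Fin T => t.val < k + 1), g t x
          = (Fintype.card X : ℝ) * (Fintype.card X : ℝ) ^ (T - (k+1)) := by
        rw [← sum_update_aux t0]
        have step : ∀ x : Fin T → X,
            ∑ a : X, ∏ t ∈ Finset.univ.filter (fun t : Fin T => t.val < k + 1),
              g t (Function.update x t0 a)
            = ∏ t ∈ Finset.univ.filter (fun t : Fin T => t.val < k), g t x := by
          intro x
          have hprod : ∀ a : X,
              ∏ t ∈ Finset.univ.filter (fun t : Fin T => t.val < k + 1),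
                g t (Function.update x t0 a)
              = g t0 (Function.update x t0 a) *
                ∏ t ∈ Finset.univ.filter (fun t : Fin T => t.val < k), g t x := by
            intro a
            rw [hfil, Finset.prod_insert hnot]
            congr 1
            apply Finset.prod_congr rfl
            intro t ht
            simp only [Finset.mem_filter] at ht
            apply hdep
            intro s hs
            apply Function.update_of_ne
            intro hst
            have : s.val < k := lt_of_le_of_lt (Fin.le_iff_val_le_val.mp hs) ht.2
            rw [hst] at this
            simp [ht0] at this
          simp only [hprod]
          rw [← Finset.sum_mul, hsum t0 x, one_mul]
        calc ∑ x : Fin T → X, ∑ a : X,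
              ∏ t ∈ Finset.univ.filter (fun t : Fin T => t.val < k + 1),
                g t (Function.update x t0 a)
            = ∑ x : Fin T → X, ∏ t ∈ Finset.univ.filter (fun t : Fin T => t.val < k), g t x := by
              exact Finset.sum_congr rfl (fun x _ => step x)
          _ = (Fintype.card X : ℝ) ^ (T - k) := ihk
          _ = (Fintype.card X : ℝ) * (Fintype.card X : ℝ) ^ (T - (k+1)) := by
              rw [← pow_succ']
              congr 1
              omega
      exact mul_left_cancel₀ (ne_of_gt hcard) hmul
  have := key T le_rfl
  simpa using this

lemma HumanModel.cc_nonneg (P : HumanModel T H M) (h : Fin T → H) (m : Fin T → M) :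
    0 ≤ P.cc h m :=
  Finset.prod_nonneg fun t _ => P.nonneg t h m (h t)

lemma MachinePolicy.cc_nonneg (Q : MachinePolicy T H M) (h : Fin T → H) (m : Fin T → M) :
    0 ≤ Q.cc h m :=
  Finset.prod_nonneg fun t _ => Q.nonneg t h m (m t)

lemma jointPMF_nonneg (P : HumanModel T H M) (Q : MachinePolicy T H M)
    (h : Fin T → H) (m : Fin T → M) : 0 ≤ jointPMF P Q h m :=
  mul_nonneg (P.cc_nonneg h m) (Q.cc_nonneg h m)

lemma human_cc_sum_one [Nonempty H] (P : HumanModel T H M) (m : Fin T → M) :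
    ∑ h : Fin T → H, P.cc h m = 1 := by
  have := chain_sum (X := H) (T := T) (fun t h => P.p t h m (h t))
    (by
      intro t x x' hxx
      have h1 : P.p t x m = P.p t x' m :=
        P.causal t x x' m m (fun s hs => hxx s (le_of_lt hs)) (fun _ _ => rfl)
      rw [h1, hxx t le_rfl])
    (by
      intro t x
      have h1 : ∀ a : H, P.p t (Function.update x t a) m = P.p t x m := fun a =>
        P.causal t (Function.update x t a) x m m
          (fun s hs => Function.update_of_ne (Fin.ne_of_lt hs) a x) (fun _ _ => rfl)
      simp only [Function.update_self, h1]
      exact P.sum_one t x m)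
  simpa [HumanModel.cc] using this

lemma joint_sum_one [Nonempty H] [Nonempty M] (P : HumanModel T H M) (Q : MachinePolicy T H M) :
    ∑ h : Fin T → H, ∑ m : Fin T → M, jointPMF P Q h m = 1 := by
  classical
  set g : Fin T → (Fin T → H × M) → ℝ := fun t x =>
    P.p t (fun s => (x s).1) (fun s => (x s).2) ((x t).1) *
    Q.q t (fun s => (x s).1) (fun s => (x s).2) ((x t).2) with hg
  have hdep : ∀ (t : Fin T) (x x' : Fin T → H × M),
      (∀ s, s ≤ t → x s = x' s) → g t x = g t x' := by
    intro t x x' hxx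
    have hp : P.p t (fun s => (x s).1) (fun s => (x s).2)
        = P.p t (fun s => (x' s).1) (fun s => (x' s).2) :=
      P.causal t _ _ _ _ (fun s hs => by rw [hxx s hs.le]) (fun s hs => by rw [hxx s hs])
    have hq : Q.q t (fun s => (x s).1) (fun s => (x s).2)
        = Q.q t (fun s => (x' s).1) (fun s => (x' s).2) :=
      Q.causal t _ _ _ _ (fun s hs => by rw [hxx s hs.le]) (fun s hs => by rw [hxx s hs.le])
    rw [hg]
    dsimp only
    rw [hp, hq, hxx t le_rfl]
  have hsum : ∀ (t : Fin T) (x : Fin T → H × M),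
      ∑ c : H × M, g t (Function.update x t c) = 1 := by
    intro t x
    set h : Fin T → H := fun s => (x s).1 with hh
    set m : Fin T → M := fun s => (x s).2 with hm
    have hfst : ∀ c : H × M,
        (fun s => ((Function.update x t c) s).1) = Function.update h t c.1 := by
      intro c; funext s
      by_cases hs : s = t
      · subst hs; simp
      · simp [Function.update_of_ne hs, hh]
    have hsnd : ∀ c : H × M,
        (fun s => ((Function.update x t c) s).2) = Function.update m t c.2 := by
      intro c; funext s
      by_cases hs : s = t
      · subst hs; simp
      · simp [Function.update_of_ne hs, hm]
    have hgc : ∀ c : H × M, g t (Function.update x t c)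
        = P.p t h (Function.update m t c.2) c.1 * Q.q t h m c.2 := by
      intro c
      rw [hg]
      dsimp only
      rw [hfst c, hsnd c, Function.update_self]
      have hq2 : Q.q t (Function.update h t c.1) (Function.update m t c.2) = Q.q t h m :=
        Q.causal t _ _ _ _ (fun s hs => Function.update_of_ne (Fin.ne_of_lt hs) _ _)
          (fun s hs => Function.update_of_ne (Fin.ne_of_lt hs) _ _)
      have hp2 : P.p t (Function.update h t c.1) (Function.update m t c.2)
          = P.p t h (Function.update m t c.2) :=
        P.causal t _ _ _ _ (fun s hs => Function.update_of_ne (Fin.ne_of_lt hs) _ _)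
          (fun _ _ => rfl)
      rw [hq2, hp2]
    calc ∑ c : H × M, g t (Function.update x t c)
        = ∑ c : H × M, P.p t h (Function.update m t c.2) c.1 * Q.q t h m c.2 :=
          Finset.sum_congr rfl (fun c _ => hgc c)
      _ = ∑ a : H, ∑ b : M, P.p t h (Function.update m t b) a * Q.q t h m b :=
          Fintype.sum_prod_type
            (f := fun c : H × M => P.p t h (Function.update m t c.2) c.1 * Q.q t h m c.2)
      _ = ∑ b : M, ∑ a : H, P.p t h (Function.update m t b) a * Q.q t h m b :=
          Finset.sum_comm
      _ = ∑ b : M, Q.q t h m b := by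
          apply Finset.sum_congr rfl
          intro b _
          rw [← Finset.sum_mul, P.sum_one t h (Function.update m t b), one_mul]
      _ = 1 := Q.sum_one t h m
  have hmain := chain_sum g hdep hsum
  calc ∑ h : Fin T → H, ∑ m : Fin T → M, jointPMF P Q h m
      = ∑ p : (Fin T → H) × (Fin T → M), jointPMF P Q p.1 p.2 :=
        (Fintype.sum_prod_type (f := fun p => jointPMF P Q p.1 p.2)).symm
    _ = ∑ x : Fin T → H × M, jointPMF P Q (fun s => (x s).1) (fun s => (x s).2) :=
        (Fintype.sum_equiv
          ⟨fun x => (fun s => (x s).1, fun s => (x s).2), fun p s => (p.1 s, p.2 s),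
           fun x => rfl, fun p => rfl⟩
          (fun x => jointPMF P Q (fun s => (x s).1) (fun s => (x s).2))
          (fun p => jointPMF P Q p.1 p.2) (fun x => rfl)).symm
    _ = ∑ x : Fin T → H × M, ∏ t, g t x := by
        apply Finset.sum_congr rfl
        intro x _
        rw [jointPMF, HumanModel.cc, MachinePolicy.cc, ← Finset.prod_mul_distrib]
    _ = 1 := hmain

lemma gibbs_ineq {ι : Type*} [Fintype ι] (a b : ι → ℝ) (ha : ∀ i, 0 ≤ a i)
    (hb : ∀ i, 0 ≤ b i) (hab : ∀ i, 0 < a i → 0 < b i) (hsum : ∑ i, b i ≤ ∑ i, a i) :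
    ∑ i, a i * Real.log (b i) ≤ ∑ i, a i * Real.log (a i) := by
  have key : ∀ i, a i * Real.log (b i) - a i * Real.log (a i) ≤ b i - a i := by
    intro i
    rcases eq_or_lt_of_le (ha i) with h0 | h0
    · rw [← h0]; simpa using hb i
    · have hbi := hab i h0
      have hlog : Real.log (b i) - Real.log (a i) ≤ b i / a i - 1 := by
        rw [← Real.log_div (ne_of_gt hbi) (ne_of_gt h0)]
        exact Real.log_le_sub_one_of_pos (div_pos hbi h0)
      have := mul_le_mul_of_nonneg_left hlog (le_of_lt h0)
      calc a i * Real.log (b i) - a i * Real.log (a i)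
          = a i * (Real.log (b i) - Real.log (a i)) := by ring
        _ ≤ a i * (b i / a i - 1) := this
        _ = b i - a i := by field_simp
  have h1 := Finset.sum_le_sum (fun i (_ : i ∈ Finset.univ) => key i)
  rw [Finset.sum_sub_distrib, Finset.sum_sub_distrib] at h1
  linarith

lemma machineEntropy_le_bound [Nonempty H] [Nonempty M]
    (P : HumanModel T H M) (Q : MachinePolicy T H M) :
    machineEntropy P Q ≤ (T : ℝ) * Real.log (Fintype.card M) := by
  classical
  have hMpos : (0:ℝ) < (Fintype.card M : ℝ) := by exact_mod_cast Fintype.card_pos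
  set c : ℝ := ((Fintype.card M : ℝ) ^ T)⁻¹ with hc
  have hcpos : 0 < c := by positivity
  set a : (Fin T → H) × (Fin T → M) → ℝ := fun p => jointPMF P Q p.1 p.2 with hadef
  set b : (Fin T → H) × (Fin T → M) → ℝ := fun p => P.cc p.1 p.2 * c with hbdef
  have hsuma : ∑ p, a p = 1 := by
    rw [hadef]
    rw [Fintype.sum_prod_type (f := fun p => jointPMF P Q p.1 p.2)]
    exact joint_sum_one P Q
  have hsumb : ∑ p, b p = 1 := by
    rw [hbdef]
    have h1 : ∑ p : (Fin T → H) × (Fin T → M), P.cc p.1 p.2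
        = (Fintype.card M : ℝ) ^ T := by
      rw [Fintype.sum_prod_type (f := fun p => P.cc p.1 p.2), Finset.sum_comm]
      rw [Finset.sum_congr rfl (fun m _ => human_cc_sum_one P m)]
      simp [Finset.card_univ]
    rw [← Finset.sum_mul, h1, hc]
    field_simp
  have hPQpos : ∀ p : (Fin T → H) × (Fin T → M), 0 < a p →
      0 < P.cc p.1 p.2 ∧ 0 < Q.cc p.1 p.2 := by
    intro p hp
    rw [hadef] at hp
    rcases mul_pos_iff.mp hp with ⟨h3, h4⟩ | ⟨h3, h4⟩
    · exact ⟨h3, h4⟩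
    · have := P.cc_nonneg p.1 p.2; linarith
  have hgibbs := gibbs_ineq a b
    (fun p => jointPMF_nonneg P Q p.1 p.2)
    (fun p => mul_nonneg (P.cc_nonneg p.1 p.2) hcpos.le)
    (fun p hp => mul_pos (hPQpos p hp).1 hcpos)
    (by rw [hsuma, hsumb])
  have h2 : ∀ p, a p * Real.log (b p)
      = a p * Real.log (P.cc p.1 p.2) + a p * Real.log c := by
    intro p
    rcases eq_or_lt_of_le (jointPMF_nonneg P Q p.1 p.2 : (0:ℝ) ≤ a p) with h0 | h0
    · have h0' : a p = 0 := h0.symm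
      rw [h0']; ring
    · rw [hbdef]
      dsimp only
      rw [Real.log_mul (ne_of_gt (hPQpos p h0).1) (ne_of_gt hcpos), mul_add]
  have h3 : ∀ p, a p * Real.log (a p)
      = a p * Real.log (P.cc p.1 p.2) + a p * Real.log (Q.cc p.1 p.2) := by
    intro p
    rcases eq_or_lt_of_le (jointPMF_nonneg P Q p.1 p.2 : (0:ℝ) ≤ a p) with h0 | h0
    · have h0' : a p = 0 := h0.symm
      rw [h0']; ring
    · have := hPQpos p h0
      rw [hadef]
      dsimp only
      rw [jointPMF, Real.log_mul (ne_of_gt this.1) (ne_of_gt this.2), mul_add]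
  have h4 : ∑ p, a p * Real.log c ≤ ∑ p, a p * Real.log (Q.cc p.1 p.2) := by
    rw [Finset.sum_congr rfl (fun p _ => h2 p), Finset.sum_congr rfl (fun p _ => h3 p),
      Finset.sum_add_distrib, Finset.sum_add_distrib] at hgibbs
    linarith
  have h5 : ∑ p, a p * Real.log c = Real.log c := by
    rw [← Finset.sum_mul, hsuma, one_mul]
  have h6 : machineEntropy P Q = - ∑ p : (Fin T → H) × (Fin T → M),
      a p * Real.log (Q.cc p.1 p.2) := by
    rw [machineEntropy,
      ← Fintype.sum_prod_type (f := fun p : (Fin T → H) × (Fin T → M) =>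
        jointPMF P Q p.1 p.2 * (- Real.log (Q.cc p.1 p.2)))]
    rw [hadef]
    simp [mul_neg, Finset.sum_neg_distrib]
  have h7 : Real.log c = -((T:ℝ) * Real.log (Fintype.card M)) := by
    rw [hc, Real.log_inv, Real.log_pow]
  rw [h6]
  rw [h5, h7] at h4
  linarith

lemma expVal_split (P : HumanModel T H M) (Q : MachinePolicy T H M)
    (r : (Fin T → H) → (Fin T → M) → ℝ) (γ : ℝ) :
    expVal P Q (fun h m => - Real.log (Q.cc h m) + γ * r h m)
      = machineEntropy P Q + γ * expVal P Q r := by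
  simp only [expVal, machineEntropy, mul_add, Finset.sum_add_distrib, Finset.mul_sum,
    mul_left_comm]

lemma expVal_le_sSup [Nonempty H] [Nonempty M] (P : HumanModel T H M)
    (Q : MachinePolicy T H M) (r : (Fin T → H) → (Fin T → M) → ℝ) :
    expVal P Q r ≤ sSup (Set.range fun p : (Fin T → H) × (Fin T → M) => r p.1 p.2) := by
  set S := sSup (Set.range fun p : (Fin T → H) × (Fin T → M) => r p.1 p.2) with hS
  have hbdd : BddAbove (Set.range fun p : (Fin T → H) × (Fin T → M) => r p.1 p.2) :=
    (Set.finite_range _).bddAbove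
  have hr : ∀ h m, r h m ≤ S := fun h m => le_csSup hbdd ⟨(h, m), rfl⟩
  calc expVal P Q r ≤ ∑ h : Fin T → H, ∑ m : Fin T → M, jointPMF P Q h m * S := by
        apply Finset.sum_le_sum
        intro h _
        apply Finset.sum_le_sum
        intro m _
        exact mul_le_mul_of_nonneg_left (hr h m) (jointPMF_nonneg P Q h m)
    _ = S := by
        simp only [← Finset.sum_mul]
        rw [joint_sum_one P Q, one_mul]

end AuxProofs

/-- monotone convergence of the entropy-regularized reward in AREA,
Theorem 5 of the paper: under the machine-optimality condition (i) and the
step-dependent inequality constraint (ii), the sequence `L^{(n)}` (for `n ≥ 1`) is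
nondecreasing and bounded above by `T·log|𝓜| + γ·max r`; hence it converges. -/
theorem area_L_monotone_converges [NeZero T] [Nonempty H] [Nonempty M]
    (r : (Fin T → H) → (Fin T → M) → ℝ) (γ : ℝ) (hγ : 0 < γ)
    (P : ℕ → HumanModel T H M) (Q : ℕ → MachinePolicy T H M)
    (hQpos : ∀ n, 1 ≤ n → ∀ (t : Fin T) (h : Fin T → H) (m : Fin T → M) (b : M),
      0 < (Q n).q t h m b)
    (hopt : ∀ (n : ℕ) (Q' : MachinePolicy T H M),
      machineEntropy (P n) Q' + γ * expVal (P n) Q' r ≤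
        machineEntropy (P n) (Q (n + 1)) + γ * expVal (P n) (Q (n + 1)) r)
    (hconstr : ∀ n, 1 ≤ n →
      expVal (P (n - 1)) (Q n) (fun h m => - Real.log ((Q n).cc h m) + γ * r h m) ≤
        expVal (P n) (Q n) (fun h m => - Real.log ((Q n).cc h m) + γ * r h m)) :
    (∀ n, 1 ≤ n → areaL P Q r γ n ≤ areaL P Q r γ (n + 1)) ∧
    (∀ n, 1 ≤ n → areaL P Q r γ n ≤
      (T : ℝ) * Real.log (Fintype.card M) +
        γ * sSup (Set.range fun p : (Fin T → H) × (Fin T → M) => r p.1 p.2)) ∧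
    ∃ l : ℝ, Filter.Tendsto (fun n => areaL P Q r γ (n + 1)) Filter.atTop (nhds l) := by
  have hmono : ∀ n, 1 ≤ n → areaL P Q r γ n ≤ areaL P Q r γ (n + 1) := by
    intro n _
    calc areaL P Q r γ n
        = machineEntropy (P n) (Q n) + γ * expVal (P n) (Q n) r := by
          rw [areaL, expVal_split]
      _ ≤ machineEntropy (P n) (Q (n + 1)) + γ * expVal (P n) (Q (n + 1)) r := hopt n (Q n)
      _ = expVal (P n) (Q (n + 1))
            (fun h m => - Real.log ((Q (n + 1)).cc h m) + γ * r h m) :=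
          (expVal_split _ _ _ _).symm
      _ ≤ expVal (P (n + 1)) (Q (n + 1))
            (fun h m => - Real.log ((Q (n + 1)).cc h m) + γ * r h m) := by
          have := hconstr (n + 1) (by omega)
          simpa using this
      _ = areaL P Q r γ (n + 1) := rfl
  have hbound : ∀ n, 1 ≤ n → areaL P Q r γ n ≤
      (T : ℝ) * Real.log (Fintype.card M) +
        γ * sSup (Set.range fun p : (Fin T → H) × (Fin T → M) => r p.1 p.2) := by
    intro n _
    rw [areaL, expVal_split]
    exact add_le_add (machineEntropy_le_bound (P n) (Q n))
      (mul_le_mul_of_nonneg_left (expVal_le_sSup (P n) (Q n) r) hγ.le)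
  refine ⟨hmono, hbound, ?_⟩
  have hm2 : Monotone (fun n => areaL P Q r γ (n + 1)) :=
    monotone_nat_of_le_succ (fun n => hmono (n + 1) (by omega))
  have hb2 : BddAbove (Set.range fun n => areaL P Q r γ (n + 1)) := by
    refine ⟨(T : ℝ) * Real.log (Fintype.card M) +
      γ * sSup (Set.range fun p : (Fin T → H) × (Fin T → M) => r p.1 p.2), ?_⟩
    rintro x ⟨n, rfl⟩
    exact hbound (n + 1) (by omega)
  exact ⟨_, tendsto_atTop_ciSup hm2 hb2⟩
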